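/- For all real x and all y with −π < y < π, |1/(1+e^{−(x+iy)})| ≤ 1/((1+e^{−x})·cos(y/2)). -/

import Mathlib

theorem stmt_4 (x y : ℝ) (hy1 : -Real.pi < y) (hy2 : y < Real.pi) :
    ‖(1 / (1 + Complex.exp (-(x + y * Complex.I))))‖ ≤
      1 / ((1 + Real.exp (-x)) * Real.cos (y / 2)) := by
  set a := Real.exp (-x) with ha
  have ha0 : 0 < a := Real.exp_pos _
  have hc : 0 < Real.cos (y / 2) := by
    apply Real.cos_pos_of_mem_Ioo
    constructor <;> [linarith; linarith]
  have habs : ‖1 + Complex.exp (-(x + y * Complex.I))‖ =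
      Real.sqrt ((1 + a * Real.cos y) ^ 2 + (a * Real.sin y) ^ 2) := by
    rw [Complex.norm_def, Complex.normSq_apply]
    simp [Complex.exp_re, Complex.exp_im, Real.cos_neg, Real.sin_neg]
    rw [← ha]
    ring_nf
  have hkey : (1 + a) * Real.cos (y / 2) ≤
      ‖1 + Complex.exp (-(x + y * Complex.I))‖ := by
    rw [habs]
    have h1 : (1 + a) * Real.cos (y / 2) =
        Real.sqrt (((1 + a) * Real.cos (y / 2)) ^ 2) := by
      rw [Real.sqrt_sq (by positivity)]
    rw [h1]
    apply Real.sqrt_le_sqrt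
    have hcos2 : Real.cos (y / 2) ^ 2 = 1 / 2 + Real.cos y / 2 := by
      rw [Real.cos_sq]; ring_nf
    have hsc : Real.sin y ^ 2 + Real.cos y ^ 2 = 1 := Real.sin_sq_add_cos_sq y
    have hcy : -1 ≤ Real.cos y := Real.neg_one_le_cos y
    have hcy1 : Real.cos y ≤ 1 := Real.cos_le_one y
    nlinarith [mul_nonneg (sq_nonneg (1 - a)) (by linarith : (0:ℝ) ≤ 1 - Real.cos y)]
  rw [norm_div, norm_one]
  exact one_div_le_one_div_of_le (by positivity) hkey
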